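/- Assume the inductive setting. Then for all integers j ≠ k, the union of the sets in the family W_{j-1}R_j = {W_{j-1}r : r ∈ R_j} is disjoint from the union of the sets in the family W_{k-1}R_k = {W_{k-1}r : r ∈ R_k}. Moreover, for all integers j < k, every set W_{k-1}r with r ∈ R_k is disjoint from Supp(H_j). -/

import Mathlib

/-- A pre-wreath structure `(Z, Y, H, X)`: `H` is a nontrivial subgroup of `Sym(Z)`,
`X ⊆ Y ⊆ Z`, `X` nonempty, every element of `H` fixes every point outside `Y`,
if `Xh` meets `X` then `h` is the identity on `X`, and every nontrivial `h ∈ H`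
moves some set `Xj` (`j ∈ H`). (Images are written with Lean's left action, so the
set `Xh` of the paper is `⇑h '' X`.) -/
def IsPreWreath {Z : Type*} (Y : Set Z) (H : Subgroup (Equiv.Perm Z)) (X : Set Z) : Prop :=
  H ≠ ⊥ ∧
  (∀ h ∈ H, ∀ z : Z, z ∉ Y → h z = z) ∧
  X ⊆ Y ∧
  X.Nonempty ∧
  (∀ h ∈ H, (⇑h '' X ∩ X).Nonempty → ∀ x ∈ X, h x = x) ∧
  (∀ h ∈ H, h ≠ 1 → ∃ j ∈ H, ⇑h '' (⇑j '' X) ≠ ⇑j '' X)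

/-- The carrier `XH = {Xh : h ∈ H}` of a pre-wreath structure. -/
def wreathCarrier {Z : Type*} (H : Subgroup (Equiv.Perm Z)) (X : Set Z) : Set (Set Z) :=
  {A : Set Z | ∃ h ∈ H, A = ⇑h '' X}

/-- The support of a subgroup of `Sym(Z)`: the points moved by some element. -/
def Supp {Z : Type*} (K : Subgroup (Equiv.Perm Z)) : Set Z :=
  {z : Z | ∃ g ∈ K, g z ≠ z}

/-- The inductive setting: `(Z, fY₀, H₁, Y₀)` is a pre-wreath structure (`Y₁ = Y₀f` is
the image of `Y₀` under the bijection `f`), `Y₀ ⊆ Supp(H₁) ⊆ Y₁` with `Supp(H₁) ≠ Y₁`,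
and `W₀` is a nonempty subset of `Y₀` whose image under `f` misses `Supp(H₁)`. -/
def InductiveSetting {Z : Type*} (H₁ : Subgroup (Equiv.Perm Z)) (f : Equiv.Perm Z)
    (Y₀ W₀ : Set Z) : Prop :=
  IsPreWreath (⇑f '' Y₀) H₁ Y₀ ∧
  Y₀ ⊆ Supp H₁ ∧ Supp H₁ ⊆ ⇑f '' Y₀ ∧ Supp H₁ ≠ ⇑f '' Y₀ ∧
  W₀.Nonempty ∧ W₀ ⊆ Y₀ ∧ (⇑f '' W₀) ∩ Supp H₁ = ∅

/-- `Hᵢ`, the conjugate of `H₁` carried over by `f^(i-1)`: this is the paper's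
`f^{-(i-1)} H₁ f^{i-1}` written in right-action notation, i.e. the subgroup
`{f^(i-1) h f^(-(i-1)) : h ∈ H₁}` of permutations acting on the left. -/
def Hseq {Z : Type*} (H₁ : Subgroup (Equiv.Perm Z)) (f : Equiv.Perm Z) (i : ℤ) :
    Subgroup (Equiv.Perm Z) :=
  Subgroup.map (MulAut.conj (f ^ (i - 1))).toMonoidHom H₁

/-- `R_j`, the subgroup generated by the `Hᵢ` with `i ≥ j`. -/
def Rseq {Z : Type*} (H₁ : Subgroup (Equiv.Perm Z)) (f : Equiv.Perm Z) (j : ℤ) :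
    Subgroup (Equiv.Perm Z) :=
  Subgroup.closure (⋃ i ∈ {i : ℤ | j ≤ i}, (Hseq H₁ f i : Set (Equiv.Perm Z)))

/-- `Lᵢ`, the subgroup generated by the `H_j` with `j < i`. -/
def Lseq {Z : Type*} (H₁ : Subgroup (Equiv.Perm Z)) (f : Equiv.Perm Z) (i : ℤ) :
    Subgroup (Equiv.Perm Z) :=
  Subgroup.closure (⋃ j ∈ {j : ℤ | j < i}, (Hseq H₁ f j : Set (Equiv.Perm Z)))

/-- `M`, the subgroup generated by all the `Hᵢ`, `i ∈ ℤ`. -/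
def Mgrp {Z : Type*} (H₁ : Subgroup (Equiv.Perm Z)) (f : Equiv.Perm Z) :
    Subgroup (Equiv.Perm Z) :=
  Subgroup.closure (⋃ i : ℤ, (Hseq H₁ f i : Set (Equiv.Perm Z)))

/-- `Wᵢ = W₀fⁱ`, the image of `W₀` under the `i`-th power of `f`. -/
def Wseq {Z : Type*} (W₀ : Set Z) (f : Equiv.Perm Z) (i : ℤ) : Set Z :=
  ⇑(f ^ i) '' W₀

namespace Stmt12Aux


variable {Z : Type*}

lemma image_pow_mul (f : Equiv.Perm Z) (a b : ℤ) (A : Set Z) :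
    ⇑(f ^ a) '' (⇑(f ^ b) '' A) = ⇑(f ^ (a + b)) '' A := by
  rw [zpow_add, Equiv.Perm.coe_mul, Set.image_comp]

lemma image_pred (f : Equiv.Perm Z) (i : ℤ) (A : Set Z) :
    ⇑(f ^ (i - 1)) '' (⇑f '' A) = ⇑(f ^ i) '' A := by
  have h1 : ⇑f '' A = ⇑(f ^ (1 : ℤ)) '' A := by rw [zpow_one]
  rw [h1, image_pow_mul]
  have h2 : i - 1 + 1 = i := by ring
  rw [h2]

lemma image_zpow_mono (f : Equiv.Perm Z) {A : Set Z} (hA : A ⊆ ⇑f '' A) :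
    ∀ a b : ℤ, a ≤ b → ⇑(f ^ a) '' A ⊆ ⇑(f ^ b) '' A := by
  intro a
  refine Int.le_induction subset_rfl ?_
  intro b hb ih
  refine ih.trans ?_
  calc ⇑(f ^ b) '' A ⊆ ⇑(f ^ b) '' (⇑f '' A) := Set.image_mono hA
    _ = ⇑(f ^ b) '' (⇑(f ^ (1:ℤ)) '' A) := by rw [zpow_one]
    _ = ⇑(f ^ (b + 1)) '' A := image_pow_mul f b 1 A

lemma mapsTo_of_fix (t : Equiv.Perm Z) (A : Set Z) (h : ∀ z, z ∉ A → t z = z) :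
    ∀ a ∈ A, t a ∈ A := by
  intro a ha
  by_contra hta
  have h2 := h (t a) hta
  have h3 := t.injective h2
  rw [h3] at hta
  exact hta ha

lemma closure_fix_on (A : Set Z) (Sgen : Set (Equiv.Perm Z))
    (h : ∀ g ∈ Sgen, ∀ z ∈ A, g z = z) :
    ∀ r ∈ Subgroup.closure Sgen, ∀ z ∈ A, r z = z := by
  intro r hr
  induction hr using Subgroup.closure_induction with
  | mem x hx => exact h x hx
  | one => intro z _; simp
  | mul x y hx hy ihx ihy =>
    intro z hz
    rw [Equiv.Perm.mul_apply, ihy z hz, ihx z hz]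
  | inv x hx ihx =>
    intro z hz
    have h1 := ihx z hz
    calc x⁻¹ z = x⁻¹ (x z) := by rw [h1]
      _ = z := by simp

lemma block (Y : Set Z) (T H : Subgroup (Equiv.Perm Z))
    (hT : ∀ t ∈ T, ∀ z, z ∉ Y → t z = z)
    (hH : ∀ g ∈ H, (∃ y ∈ Y, g y ∈ Y) → ∀ y ∈ Y, g y = y) :
    ∀ r ∈ Subgroup.closure ((T : Set (Equiv.Perm Z)) ∪ (H : Set (Equiv.Perm Z))),
      ∀ g ∈ H,
      (∃ h ∈ H, ∃ t ∈ T, ∀ y ∈ Y, r (h (t y)) = g y) ∧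
      (∃ h ∈ H, ∃ t ∈ T, ∀ y ∈ Y, r (g y) = h (t y)) := by
  have hTY : ∀ t ∈ T, ∀ y ∈ Y, t y ∈ Y := fun t ht => mapsTo_of_fix t Y (hT t ht)
  intro r hr
  induction hr using Subgroup.closure_induction with
  | mem x hx =>
    intro g hg
    rcases hx with hx | hx
    · have hxT : x ∈ T := hx
      by_cases hc : ∃ y ∈ Y, g y ∈ Y
      · have hid := hH g hg hc
        constructor
        · refine ⟨1, one_mem _, x⁻¹, inv_mem hxT, fun y hy => ?_⟩
          simp [hid y hy]
        · refine ⟨1, one_mem _, x, hxT, fun y hy => ?_⟩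
          simp [hid y hy]
      · push_neg at hc
        constructor
        · refine ⟨g, hg, 1, one_mem _, fun y hy => ?_⟩
          simp only [Equiv.Perm.one_apply]
          exact hT x hxT (g y) (hc y hy)
        · refine ⟨g, hg, 1, one_mem _, fun y hy => ?_⟩
          simp only [Equiv.Perm.one_apply]
          exact hT x hxT (g y) (hc y hy)
    · have hxH : x ∈ H := hx
      constructor
      · refine ⟨x⁻¹ * g, mul_mem (inv_mem hxH) hg, 1, one_mem _, fun y hy => ?_⟩
        simp [Equiv.Perm.mul_apply]
      · refine ⟨x * g, mul_mem hxH hg, 1, one_mem _, fun y hy => ?_⟩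
        simp [Equiv.Perm.mul_apply]
  | one =>
    intro g hg
    exact ⟨⟨g, hg, 1, one_mem _, fun y hy => by simp⟩,
           ⟨g, hg, 1, one_mem _, fun y hy => by simp⟩⟩
  | mul x y hx hy ihx ihy =>
    intro g hg
    constructor
    · obtain ⟨h₁, hh₁, t₁, ht₁, e₁⟩ := (ihx g hg).1
      obtain ⟨h₂, hh₂, t₂, ht₂, e₂⟩ := (ihy h₁ hh₁).1
      refine ⟨h₂, hh₂, t₂ * t₁, mul_mem ht₂ ht₁, fun z hz => ?_⟩
      have hz1 : t₁ z ∈ Y := hTY _ ht₁ z hz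
      simp only [Equiv.Perm.mul_apply]
      rw [e₂ (t₁ z) hz1]
      exact e₁ z hz
    · obtain ⟨h₂, hh₂, t₂, ht₂, e₂⟩ := (ihy g hg).2
      obtain ⟨h₁, hh₁, t₁, ht₁, e₁⟩ := (ihx h₂ hh₂).2
      refine ⟨h₁, hh₁, t₁ * t₂, mul_mem ht₁ ht₂, fun z hz => ?_⟩
      have hz2 : t₂ z ∈ Y := hTY _ ht₂ z hz
      simp only [Equiv.Perm.mul_apply]
      rw [e₂ z hz]
      exact e₁ (t₂ z) hz2
  | inv x hx ihx =>
    intro g hg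
    constructor
    · obtain ⟨h, hh, t, ht, e⟩ := (ihx g hg).2
      refine ⟨h, hh, t, ht, fun y hy => ?_⟩
      rw [← e y hy]
      simp
    · obtain ⟨h, hh, t, ht, e⟩ := (ihx g hg).1
      refine ⟨h, hh, t, ht, fun y hy => ?_⟩
      rw [← e y hy]
      simp

lemma main (K : ℤ → Subgroup (Equiv.Perm Z)) (YY : ℤ → Set Z) (W Sset : Set Z) (m k : ℤ)
    (hKY : ∀ i n : ℤ, i ≤ n → ∀ g ∈ K i, ∀ z, z ∉ YY n → g z = z)
    (hmono : ∀ a b : ℤ, a ≤ b → YY a ⊆ YY b)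
    (hdich : ∀ N : ℤ, ∀ g ∈ K N, (∃ y ∈ YY (N - 1), g y ∈ YY (N - 1)) →
      ∀ y ∈ YY (N - 1), g y = y)
    (hW : W ⊆ YY (k - 1)) (hS : Sset ⊆ YY (k - 1))
    (hbase : ∀ i : ℤ, i ≤ k - 1 → ∀ g ∈ K i, ∀ w ∈ W, g w = w)
    (hWS : ∀ w ∈ W, w ∉ Sset) :
    ∀ n : ℤ, k - 1 ≤ n →
      ∀ r ∈ Subgroup.closure (⋃ i ∈ Set.Icc m n, (K i : Set (Equiv.Perm Z))),
      ∀ w ∈ W, r w ∉ Sset := by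
  refine Int.le_induction ?_ ?_
  ·
    have hfix : ∀ r ∈ Subgroup.closure (⋃ i ∈ Set.Icc m (k - 1), (K i : Set (Equiv.Perm Z))),
        ∀ z ∈ W, r z = z := by
      apply closure_fix_on
      intro g hg z hz
      simp only [Set.mem_iUnion, Set.mem_Icc, SetLike.mem_coe, exists_prop] at hg
      obtain ⟨i, ⟨_, hik⟩, hgi⟩ := hg
      exact hbase i hik g hgi z hz
    intro r hr w hw
    rw [hfix r hr w hw]
    exact hWS w hw
  · intro n hn ih
    have hstep : Subgroup.closure (⋃ i ∈ Set.Icc m (n + 1), (K i : Set (Equiv.Perm Z))) ≤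
        Subgroup.closure
          ((Subgroup.closure (⋃ i ∈ Set.Icc m n, (K i : Set (Equiv.Perm Z))) :
            Set (Equiv.Perm Z)) ∪ (K (n + 1) : Set (Equiv.Perm Z))) := by
      rw [Subgroup.closure_le]
      intro g hg
      simp only [Set.mem_iUnion, Set.mem_Icc, SetLike.mem_coe, exists_prop] at hg
      obtain ⟨i, ⟨him, hin⟩, hgi⟩ := hg
      apply Subgroup.subset_closure
      rcases lt_or_ge i (n + 1) with hlt | hge
      · left
        have : g ∈ Subgroup.closure (⋃ i ∈ Set.Icc m n, (K i : Set (Equiv.Perm Z))) := by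
          apply Subgroup.subset_closure
          simp only [Set.mem_iUnion, Set.mem_Icc, SetLike.mem_coe, exists_prop]
          exact ⟨i, ⟨him, by omega⟩, hgi⟩
        exact this
      · right
        have hieq : i = n + 1 := le_antisymm hin hge
        rw [hieq] at hgi
        exact hgi
    have hT : ∀ t ∈ Subgroup.closure (⋃ i ∈ Set.Icc m n, (K i : Set (Equiv.Perm Z))),
        ∀ z, z ∉ YY n → t z = z := by
      intro t ht z hz
      refine closure_fix_on (YY n)ᶜ _ ?_ t ht z hz
      intro g hg z' hz'
      simp only [Set.mem_iUnion, Set.mem_Icc, SetLike.mem_coe, exists_prop] at hg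
      obtain ⟨i, ⟨_, hin⟩, hgi⟩ := hg
      exact hKY i n hin g hgi z' hz'
    have hdich' : ∀ g ∈ K (n + 1), (∃ y ∈ YY n, g y ∈ YY n) → ∀ y ∈ YY n, g y = y := by
      have h1 := hdich (n + 1)
      simpa using h1
    intro r hr w hw
    obtain ⟨h, hh, t, ht, e⟩ :=
      (block (YY n) _ (K (n + 1)) hT hdich' r (hstep hr) 1 (one_mem _)).2
    have hwY : w ∈ YY n := hmono (k - 1) n hn (hW hw)
    have htw : t w ∈ YY n := mapsTo_of_fix t (YY n) (hT t ht) w hwY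
    have hrw : r w = h (t w) := by
      have h2 := e w hwY
      simpa using h2
    by_cases hc : ∃ y ∈ YY n, h y ∈ YY n
    · have hid := hdich' h hh hc
      have h3 : r w = t w := by rw [hrw, hid (t w) htw]
      rw [h3]
      exact ih t ht w hw
    · push_neg at hc
      have h3 : r w ∉ YY n := by rw [hrw]; exact hc (t w) htw
      intro hmem
      exact h3 (hmono (k - 1) n hn (hS hmem))


lemma mem_Hseq (H₁ : Subgroup (Equiv.Perm Z)) (f : Equiv.Perm Z) (i : ℤ) (g : Equiv.Perm Z) :
    g ∈ Hseq H₁ f i ↔ ∃ h ∈ H₁, (f ^ (i - 1)) * h * (f ^ (i - 1))⁻¹ = g := by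
  simp only [Hseq, Subgroup.mem_map, MulEquiv.coe_toMonoidHom, MulAut.conj_apply]

lemma conj_apply_img (c h : Equiv.Perm Z) (x : Z) : (c * h * c⁻¹) (c x) = c (h x) := by
  simp [Equiv.Perm.mul_apply]

lemma Supp_Hseq (H₁ : Subgroup (Equiv.Perm Z)) (f : Equiv.Perm Z) (i : ℤ) :
    Supp (Hseq H₁ f i) = ⇑(f ^ (i - 1)) '' Supp H₁ := by
  ext z
  constructor
  · rintro ⟨g, hg, hgz⟩
    rw [mem_Hseq] at hg
    obtain ⟨h, hh, rfl⟩ := hg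
    refine ⟨(f ^ (i - 1))⁻¹ z, ⟨h, hh, ?_⟩, by simp⟩
    intro heq
    apply hgz
    rw [Equiv.Perm.mul_apply, Equiv.Perm.mul_apply, heq]
    simp
  · rintro ⟨y, ⟨h, hh, hhy⟩, rfl⟩
    refine ⟨(f ^ (i - 1)) * h * (f ^ (i - 1))⁻¹, (mem_Hseq _ _ _ _).2 ⟨h, hh, rfl⟩, ?_⟩
    rw [conj_apply_img]
    intro hc
    exact hhy ((f ^ (i - 1)).injective hc)

lemma disj_image (c : Equiv.Perm Z) (A B : Set Z) (hAB : A ∩ B = ∅) :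
    (⇑c '' A) ∩ (⇑c '' B) = ∅ := by
  rw [← Set.image_inter c.injective, hAB, Set.image_empty]

end Stmt12Aux

/-- In the inductive setting, for `j ≠ k` the union of the sets of the
family `W_{j-1}R_j` is disjoint from the union of the sets of the family `W_{k-1}R_k`;
moreover for `j < k` every set `W_{k-1}r` (`r ∈ R_k`) is disjoint from `Supp(H_j)`. -/
theorem stmt12 {Z : Type*} (H₁ : Subgroup (Equiv.Perm Z)) (f : Equiv.Perm Z)
    (Y₀ W₀ : Set Z) (hsetting : InductiveSetting H₁ f Y₀ W₀) :
    (∀ j k : ℤ, j ≠ k →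
      (⋃ r ∈ Rseq H₁ f j, ⇑r '' Wseq W₀ f (j - 1)) ∩
        (⋃ r ∈ Rseq H₁ f k, ⇑r '' Wseq W₀ f (k - 1)) = ∅) ∧
    (∀ j k : ℤ, j < k → ∀ r ∈ Rseq H₁ f k,
      (⇑r '' Wseq W₀ f (k - 1)) ∩ Supp (Hseq H₁ f j) = ∅) := by

  obtain ⟨⟨-, hfixout, hY₀Y₁, -, hmeet, -⟩, hY₀S, hSY₁, -, -, hW₀Y₀, hWdisj⟩ := hsetting
  have hY₀fY₀ : Y₀ ⊆ ⇑f '' Y₀ := fun z hz => hSY₁ (hY₀S hz)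
  have hSfS : Supp H₁ ⊆ ⇑f '' Supp H₁ := fun z hz => Set.image_mono hY₀S (hSY₁ hz)
  have hmonoYY : ∀ a b : ℤ, a ≤ b → ⇑(f ^ a) '' Y₀ ⊆ ⇑(f ^ b) '' Y₀ :=
    Stmt12Aux.image_zpow_mono f hY₀fY₀
  have hmonoS : ∀ a b : ℤ, a ≤ b → ⇑(f ^ a) '' Supp H₁ ⊆ ⇑(f ^ b) '' Supp H₁ :=
    Stmt12Aux.image_zpow_mono f hSfS
  have Schain : ∀ a b : ℤ, a ≤ b → Supp (Hseq H₁ f a) ⊆ Supp (Hseq H₁ f b) := by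
    intro a b hab
    rw [Stmt12Aux.Supp_Hseq, Stmt12Aux.Supp_Hseq]
    exact hmonoS (a - 1) (b - 1) (by omega)
  have hKY : ∀ i n : ℤ, i ≤ n → ∀ g ∈ Hseq H₁ f i, ∀ z, z ∉ ⇑(f ^ n) '' Y₀ → g z = z := by
    intro i n hin g hg z hz
    rw [Stmt12Aux.mem_Hseq] at hg
    obtain ⟨h, hh, rfl⟩ := hg
    have hz' : (f ^ (i - 1))⁻¹ z ∉ ⇑f '' Y₀ := by
      intro hmem
      apply hz
      apply hmonoYY i n hin
      rw [← Stmt12Aux.image_pred f i Y₀]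
      exact ⟨(f ^ (i - 1))⁻¹ z, hmem, by simp⟩
    have h1 := hfixout h hh _ hz'
    rw [Equiv.Perm.mul_apply, Equiv.Perm.mul_apply, h1]
    simp
  have hdich : ∀ N : ℤ, ∀ g ∈ Hseq H₁ f N,
      (∃ y ∈ ⇑(f ^ (N - 1)) '' Y₀, g y ∈ ⇑(f ^ (N - 1)) '' Y₀) →
      ∀ y ∈ ⇑(f ^ (N - 1)) '' Y₀, g y = y := by
    intro N g hg hex y hy
    rw [Stmt12Aux.mem_Hseq] at hg
    obtain ⟨h, hh, rfl⟩ := hg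
    obtain ⟨u, hu, hgu⟩ := hex
    obtain ⟨x0, hx0, rfl⟩ := hu
    rw [Stmt12Aux.conj_apply_img] at hgu
    have hx0' : h x0 ∈ Y₀ := ((f ^ (N - 1)).injective.mem_set_image).1 hgu
    have hid := hmeet h hh ⟨h x0, ⟨x0, hx0, rfl⟩, hx0'⟩
    obtain ⟨x, hx, rfl⟩ := hy
    rw [Stmt12Aux.conj_apply_img, hid x hx]
  have Tmono : ∀ (m n₁ n₂ : ℤ), n₁ ≤ n₂ →
      Subgroup.closure (⋃ i ∈ Set.Icc m n₁, (Hseq H₁ f i : Set (Equiv.Perm Z))) ≤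
      Subgroup.closure (⋃ i ∈ Set.Icc m n₂, (Hseq H₁ f i : Set (Equiv.Perm Z))) := by
    intro m n₁ n₂ h
    exact Subgroup.closure_mono (Set.biUnion_subset_biUnion_left (Set.Icc_subset_Icc_right h))
  have hRT : ∀ m : ℤ, ∀ r ∈ Rseq H₁ f m, ∀ n0 : ℤ, ∃ n : ℤ, n0 ≤ n ∧
      r ∈ Subgroup.closure (⋃ i ∈ Set.Icc m n, (Hseq H₁ f i : Set (Equiv.Perm Z))) := by
    intro m r hr
    induction hr using Subgroup.closure_induction with
    | mem x hx =>
      intro n0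
      simp only [Set.mem_iUnion, Set.mem_setOf_eq, SetLike.mem_coe, exists_prop] at hx
      obtain ⟨i, him, hxi⟩ := hx
      refine ⟨max n0 i, le_max_left _ _, Subgroup.subset_closure ?_⟩
      simp only [Set.mem_iUnion, Set.mem_Icc, SetLike.mem_coe, exists_prop]
      exact ⟨i, ⟨him, le_max_right _ _⟩, hxi⟩
    | one => intro n0; exact ⟨n0, le_refl _, one_mem _⟩
    | mul x y hx hy ihx ihy =>
      intro n0
      obtain ⟨n₁, hn₁, hx1⟩ := ihx n0
      obtain ⟨n₂, hn₂, hy2⟩ := ihy n0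
      refine ⟨max n₁ n₂, le_trans hn₁ (le_max_left _ _), ?_⟩
      exact mul_mem (Tmono m n₁ _ (le_max_left _ _) hx1) (Tmono m n₂ _ (le_max_right _ _) hy2)
    | inv x hx ihx =>
      intro n0
      obtain ⟨n₁, hn₁, hx1⟩ := ihx n0
      exact ⟨n₁, hn₁, inv_mem hx1⟩
  have MAIN : ∀ m k : ℤ, ∀ r ∈ Rseq H₁ f m, ∀ w ∈ Wseq W₀ f (k - 1),
      r w ∉ Supp (Hseq H₁ f (k - 1)) := by
    intro m k r hr w hw
    have hW : Wseq W₀ f (k - 1) ⊆ ⇑(f ^ (k - 1)) '' Y₀ := by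
      simp only [Wseq]
      exact Set.image_mono hW₀Y₀
    have hS : Supp (Hseq H₁ f (k - 1)) ⊆ ⇑(f ^ (k - 1)) '' Y₀ := by
      rw [Stmt12Aux.Supp_Hseq]
      refine (Set.image_mono hSY₁).trans ?_
      rw [Stmt12Aux.image_pred]
    have hWS : ∀ w' ∈ Wseq W₀ f (k - 1), w' ∉ Supp (Hseq H₁ f (k - 1)) := by
      intro w' hw' hmem
      rw [Stmt12Aux.Supp_Hseq] at hmem
      have hWrw : Wseq W₀ f (k - 1) = ⇑(f ^ (k - 1 - 1)) '' (⇑f '' W₀) := by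
        simp only [Wseq]
        rw [Stmt12Aux.image_pred]
      rw [hWrw] at hw'
      have hd := Stmt12Aux.disj_image (f ^ (k - 1 - 1)) (⇑f '' W₀) (Supp H₁) hWdisj
      exact Set.eq_empty_iff_forall_notMem.1 hd w' ⟨hw', hmem⟩
    have hbase : ∀ i : ℤ, i ≤ k - 1 → ∀ g ∈ Hseq H₁ f i, ∀ w' ∈ Wseq W₀ f (k - 1),
        g w' = w' := by
      intro i hik g hg w' hw'
      by_contra hne
      have h1 : w' ∈ Supp (Hseq H₁ f i) := ⟨g, hg, hne⟩
      exact hWS w' hw' (Schain i (k - 1) hik h1)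
    obtain ⟨n, hn, hrn⟩ := hRT m r hr (k - 1)
    exact Stmt12Aux.main (Hseq H₁ f) (fun i => ⇑(f ^ i) '' Y₀) (Wseq W₀ f (k - 1))
      (Supp (Hseq H₁ f (k - 1))) m k hKY hmonoYY hdich hW hS hbase hWS n hn r hrn w hw
  have Rmono : ∀ a b : ℤ, a ≤ b → Rseq H₁ f b ≤ Rseq H₁ f a := by
    intro a b hab
    apply Subgroup.closure_mono
    apply Set.biUnion_subset_biUnion_left
    intro i hi
    exact le_trans hab hi
  have WinS : ∀ j : ℤ, Wseq W₀ f (j - 1) ⊆ Supp (Hseq H₁ f j) := by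
    intro j
    rw [Stmt12Aux.Supp_Hseq]
    simp only [Wseq]
    exact Set.image_mono (hW₀Y₀.trans hY₀S)
  constructor
  · have key : ∀ j k : ℤ, j < k →
        (⋃ r ∈ Rseq H₁ f j, ⇑r '' Wseq W₀ f (j - 1)) ∩
          (⋃ r ∈ Rseq H₁ f k, ⇑r '' Wseq W₀ f (k - 1)) = ∅ := by
      intro j k hjk
      apply Set.eq_empty_iff_forall_notMem.2
      rintro z ⟨hz1, hz2⟩
      simp only [Set.mem_iUnion, Set.mem_image, exists_prop] at hz1 hz2
      obtain ⟨r, hr, w, hw, hrw⟩ := hz1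
      obtain ⟨r', hr', w', hw', hrw'⟩ := hz2
      have hR : r⁻¹ * r' ∈ Rseq H₁ f j := mul_mem (inv_mem hr) (Rmono j k hjk.le hr')
      apply MAIN j k _ hR w' hw'
      have hww : (r⁻¹ * r') w' = w := by
        rw [Equiv.Perm.mul_apply, hrw', ← hrw]
        simp
      rw [hww]
      exact Schain j (k - 1) (by omega) (WinS j hw)
    intro j k hjk
    rcases lt_or_gt_of_ne hjk with h | h
    · exact key j k h
    · rw [Set.inter_comm]
      exact key k j h
  · intro j k hjk r hr
    apply Set.eq_empty_iff_forall_notMem.2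
    rintro z ⟨hz1, hz2⟩
    obtain ⟨w, hw, rfl⟩ := hz1
    exact MAIN k k r hr w hw (Schain j (k - 1) (by omega) hz2)
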